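/- arXiv:2001.07741 — 5 statements merged into one kernel-verified Lean document; each statement's English description precedes it below -/
import Mathlib

section
/- Suppose for every finite demand-pair set P with |P| ≤ p* there exists a subgraph satisfying all pairs of P with at most A edges, and for every P with |P| ≥ p* there exists a subgraph with at most B·|P|^c edges (c > 0 a fixed constant) satisfying at least an α-fraction (0 < α ≤ 1) of the pairs of P. Then for every finite P there exists a subgraph satisfying all pairs of P with at most A + (B/(1-(1-α)^c))·|P|^c edges. -/
/-- Abstract form of the Main Lemma. `sat H q` means the edge set `H` satisfies the demand
pair `q` (e.g. `dist_H ≤ dist_G + k`); it is monotone under adding edges.  If every demand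
set of size `≤ p*` admits a complete sparsifier on `≤ A` edges, and every demand set of
size `≥ p*` admits a sparsifier on `≤ B·|P|^c` edges satisfying an `α`-fraction of pairs,
then every demand set `P` admits a complete sparsifier on
`≤ A + (B/(1-(1-α)^c))·|P|^c` edges. -/
theorem stmt1 {E Q : Type} [DecidableEq E] [DecidableEq Q]
    (sat : Finset E → Q → Prop)
    (hmono : ∀ (H H' : Finset E) (q : Q), H ⊆ H' → sat H q → sat H' q)
    (α c A B : ℝ) (hα0 : 0 < α) (hα1 : α ≤ 1) (hc : 0 < c) (hB : 0 ≤ B)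
    (pstar : ℕ)
    (hcomplete : ∀ P : Finset Q, P.card ≤ pstar →
      ∃ H : Finset E, (H.card : ℝ) ≤ A ∧ ∀ q ∈ P, sat H q)
    (hslack : ∀ P : Finset Q, pstar ≤ P.card →
      ∃ H : Finset E, (H.card : ℝ) ≤ B * (P.card : ℝ) ^ c ∧
        ∃ P' ⊆ P, α * (P.card : ℝ) ≤ (P'.card : ℝ) ∧ ∀ q ∈ P', sat H q) :
    ∀ P : Finset Q, ∃ H : Finset E,
      (H.card : ℝ) ≤ A + (B / (1 - (1 - α) ^ c)) * (P.card : ℝ) ^ c ∧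
      ∀ q ∈ P, sat H q := by
  have h0 : (0:ℝ) < 1 - (1 - α) ^ c := by
    have h1 : (0:ℝ) ≤ 1 - α := by linarith
    have h2 : (1 - α) ^ c < 1 := by
      rcases eq_or_lt_of_le h1 with h | h
      · rw [← h, Real.zero_rpow hc.ne']; norm_num
      · calc (1-α)^c < 1^c := Real.rpow_lt_rpow h1 (by linarith) hc
          _ = 1 := Real.one_rpow c
    linarith
  have hK : 0 ≤ B / (1 - (1 - α) ^ c) := div_nonneg hB h0.le
  intro P
  generalize hn : P.card = n
  induction n using Nat.strong_induction_on generalizing P with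
  | _ n ih =>
  subst hn
  by_cases hle : P.card ≤ pstar
  · obtain ⟨H, hH, hsat⟩ := hcomplete P hle
    refine ⟨H, le_trans hH ?_, hsat⟩
    have : 0 ≤ (B / (1 - (1 - α) ^ c)) * (P.card : ℝ) ^ c :=
      mul_nonneg hK (Real.rpow_nonneg (Nat.cast_nonneg _) c)
    linarith
  · push_neg at hle
    obtain ⟨H1, hH1, P', hP'sub, hP'card, hsat1⟩ := hslack P hle.le
    have hn1 : 1 ≤ P.card := by omega
    have hP'pos : 0 < P'.card := by
      have h : (0:ℝ) < α * P.card := mul_pos hα0 (by exact_mod_cast hn1)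
      have := lt_of_lt_of_le h hP'card
      exact_mod_cast this
    have hsublecard : P'.card ≤ P.card := Finset.card_le_card hP'sub
    have hlt : (P \ P').card < P.card := by
      have := Finset.card_sdiff_of_subset hP'sub
      omega
    obtain ⟨H2, hH2, hsat2⟩ := ih _ hlt (P \ P') rfl
    refine ⟨H1 ∪ H2, ?_, ?_⟩
    · have hcard : ((H1 ∪ H2).card : ℝ) ≤ (H1.card : ℝ) + H2.card := by
        exact_mod_cast Finset.card_union_le H1 H2
      have hm : ((P \ P').card : ℝ) ≤ (1 - α) * P.card := by
        have h1 := Finset.card_sdiff_of_subset hP'sub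
        have heq : ((P \ P').card : ℝ) = (P.card : ℝ) - P'.card := by
          rw [h1]; push_cast [hsublecard]; ring
        rw [heq]; nlinarith [hP'card]
      have hmc : ((P \ P').card : ℝ)^c ≤ (1-α)^c * (P.card:ℝ)^c := by
        calc ((P \ P').card : ℝ)^c ≤ ((1-α)*P.card)^c :=
              Real.rpow_le_rpow (Nat.cast_nonneg _) hm hc.le
          _ = (1-α)^c * (P.card:ℝ)^c := Real.mul_rpow (by linarith) (Nat.cast_nonneg _)
      set K := B / (1 - (1 - α) ^ c) with hKdef
      have hKB : K * (1 - (1-α)^c) = B := div_mul_cancel₀ B h0.ne'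
      have hmul := mul_le_mul_of_nonneg_left hmc hK
      have hfinal : (H1.card : ℝ) + H2.card ≤ A + K * (P.card:ℝ)^c := by
        nlinarith [Real.rpow_nonneg (Nat.cast_nonneg P.card : (0:ℝ) ≤ (P.card:ℝ)) c]
      linarith
    · intro q hq
      by_cases hq' : q ∈ P'
      · exact hmono H1 _ q Finset.subset_union_left (hsat1 q hq')
      · exact hmono H2 _ q Finset.subset_union_right
          (hsat2 q (Finset.mem_sdiff.mpr ⟨hq, hq'⟩))
end

section
/- For every n-node directed weighted graph G and set P of p demand pairs, there exists a subgraph H with O(n·p^{1/2}) edges and a subset P' ⊆ P with |P'| ≥ (1 - 1/e)·|P| (in expectation) such that dist_H(s,t) = dist_G(s,t) for all (s,t) ∈ P'. Concretely, with ℓ = n/p^{1/2}, one can achieve |E(H)| ≤ p·ℓ + 2n·|R| where R is a random node sample of rate 1/ℓ, yielding expected size at most p·ℓ + 2n²/ℓ = 3n·p^{1/2}. -/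
open scoped ENNReal

/-- `DWalk adj s l t`: `s :: l` is a walk from `s` to `t` in the directed graph with
adjacency relation `adj`; the walk has `l.length` edges. -/
def DWalk {V : Type} (adj : V → V → Prop) : V → List V → V → Prop
  | s, [], t => s = t
  | s, u :: l, t => adj s u ∧ DWalk adj u l t

/-- Total weight of the walk `u :: l` under edge weights `w`. -/
noncomputable def wWeight {V : Type} (w : V → V → ℝ≥0∞) : V → List V → ℝ≥0∞
  | _, [] => 0
  | u, v :: l => w u v + wWeight w v l

/-- Shortest-path distance from `s` to `t` (∞ if unreachable). -/
noncomputable def ddist {V : Type} (adj : V → V → Prop) (w : V → V → ℝ≥0∞) (s t : V) : ℝ≥0∞ :=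
  sInf {x | ∃ l, DWalk adj s l t ∧ wWeight w s l = x}

/-- Reachability in a directed graph. -/
def DReach {V : Type} (adj : V → V → Prop) (s t : V) : Prop := ∃ l, DWalk adj s l t
open MeasureTheory in
/-- The law of sampling each node of `V` independently with probability `q`. -/
noncomputable def bernoulliSample (V : Type) [Fintype V] (q : ℝ≥0∞) (hq : q ≤ 1) :
    Measure (V → Bool) :=
  Measure.pi fun _ => (PMF.bernoulli q.toNNReal (by simpa using ENNReal.toNNReal_mono ENNReal.one_ne_top hq)).toMeasure

section Walks
variable {V : Type} {adj adj' : V → V → Prop} {w : V → V → ℝ≥0∞} {s t u v : V} {l l1 l2 : List V}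

lemma ddist_le (h : DWalk adj s l t) : ddist adj w s t ≤ wWeight w s l :=
  sInf_le ⟨l, h, rfl⟩

lemma dwalk_mono (hadj : ∀ a b, adj a b → adj' a b) :
    ∀ {s l t}, DWalk adj s l t → DWalk adj' s l t := by
  intro s l
  induction l generalizing s with
  | nil => intro t h; exact h
  | cons u l ih => intro t h; exact ⟨hadj _ _ h.1, ih h.2⟩

lemma ddist_anti (hadj : ∀ a b, adj a b → adj' a b) :
    ddist adj' w s t ≤ ddist adj w s t := by
  apply sInf_le_sInf
  rintro x ⟨l, hl, rfl⟩
  exact ⟨l, dwalk_mono hadj hl, rfl⟩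

lemma dwalk_append (h1 : DWalk adj s l1 u) (h2 : DWalk adj u l2 t) :
    DWalk adj s (l1 ++ l2) t := by
  induction l1 generalizing s with
  | nil => cases h1; exact h2
  | cons a l ih => exact ⟨h1.1, ih h1.2⟩

lemma wWeight_append (h1 : DWalk adj s l1 u) :
    wWeight w s (l1 ++ l2) = wWeight w s l1 + wWeight w u l2 := by
  induction l1 generalizing s with
  | nil => cases h1; simp [wWeight]
  | cons a l ih =>
      show w s a + wWeight w a (l ++ l2) = w s a + wWeight w a l + wWeight w u l2
      rw [ih h1.2, add_assoc]

lemma dwalk_split (h : DWalk adj s (l1 ++ v :: l2) t) :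
    DWalk adj s (l1 ++ [v]) v ∧ DWalk adj v l2 t := by
  induction l1 generalizing s with
  | nil => exact ⟨⟨h.1, rfl⟩, h.2⟩
  | cons a l ih =>
      obtain ⟨h1, h2⟩ := ih h.2
      exact ⟨⟨h.1, h1⟩, h2⟩

lemma ddist_self : ddist adj w s s = 0 :=
  le_antisymm (sInf_le ⟨[], rfl, rfl⟩) zero_le

lemma ddist_eq_top_of_not_reach (h : ¬ DReach adj s t) : ddist adj w s t = ⊤ := by
  rw [ddist]
  have he : {x | ∃ l, DWalk adj s l t ∧ wWeight w s l = x} = (∅ : Set ℝ≥0∞) := by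
    rw [Set.eq_empty_iff_forall_notMem]
    rintro x ⟨l, hl, -⟩
    exact h ⟨l, hl⟩
  rw [he]
  exact sInf_empty

lemma dreach_of_ddist_ne_top (h : ddist adj w s t ≠ ⊤) : DReach adj s t := by
  by_contra hc
  exact h (ddist_eq_top_of_not_reach hc)

/-- split a walk at any vertex on it -/
lemma dwalk_split_at (h : DWalk adj s l t) (hv : v ∈ s :: l) :
    ∃ la lb, DWalk adj s la v ∧ DWalk adj v lb t ∧
      wWeight w s la + wWeight w v lb = wWeight w s l := by
  rcases List.mem_cons.1 hv with rfl | hv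
  · exact ⟨[], l, rfl, h, by simp [wWeight]⟩
  · obtain ⟨l1, l2, rfl⟩ := List.append_of_mem hv
    obtain ⟨h1, h2⟩ := dwalk_split h
    refine ⟨l1 ++ [v], l2, h1, h2, ?_⟩
    rw [← wWeight_append h1, List.append_assoc]
    simp

/-- cycle removal -/
lemma dwalk_nodup_aux (n : ℕ) : ∀ {s : V} {l : List V} {t : V}, l.length ≤ n → DWalk adj s l t →
    ∃ l', DWalk adj s l' t ∧ (s :: l').Nodup ∧ l' ⊆ l ∧
      wWeight w s l' ≤ wWeight w s l := by
  induction n with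
  | zero =>
      intro s l t hlen h
      rw [List.length_eq_zero_iff.1 (Nat.le_zero.1 hlen)] at h ⊢
      exact ⟨[], h, by simp, by simp, le_rfl⟩
  | succ n ih =>
      intro s l t hlen h
      by_cases hs : s ∈ l
      · obtain ⟨l1, l2, rfl⟩ := List.append_of_mem hs
        obtain ⟨-, h2⟩ := dwalk_split h
        obtain ⟨l', hw', hn', hsub', hle'⟩ := ih (by simp at hlen ⊢; omega) h2
        refine ⟨l', hw', hn', fun x hx => by simp [hsub' hx], hle'.trans ?_⟩
        have h1 : DWalk adj s (l1 ++ [s]) s := (dwalk_split h).1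
        rw [show l1 ++ s :: l2 = (l1 ++ [s]) ++ l2 by simp, wWeight_append h1]
        exact le_add_self
      · cases l with
        | nil => exact ⟨[], h, by simp, by simp, le_rfl⟩
        | cons a l0 =>
          obtain ⟨l', hw', hn', hsub', hle'⟩ := ih (by simp at hlen ⊢; omega) h.2
          refine ⟨a :: l', ⟨h.1, hw'⟩, ?_, ?_, ?_⟩
          · refine List.nodup_cons.2 ⟨?_, hn'⟩
            intro hmem
            rcases List.mem_cons.1 hmem with rfl | hmem
            · exact hs (List.mem_cons_self)
            · exact hs (List.mem_cons_of_mem _ (hsub' hmem))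
          · intro x hx
            rcases List.mem_cons.1 hx with rfl | hx
            · exact List.mem_cons_self
            · exact List.mem_cons_of_mem _ (hsub' hx)
          · exact add_le_add_right hle' _

lemma dwalk_nodup (h : DWalk adj s l t) :
    ∃ l', DWalk adj s l' t ∧ (s :: l').Nodup ∧ l' ⊆ l ∧
      wWeight w s l' ≤ wWeight w s l :=
  dwalk_nodup_aux l.length le_rfl h

/-- existence of a nodup shortest walk -/
lemma exists_shortest [Fintype V] (h : DReach adj s t) :
    ∃ l, DWalk adj s l t ∧ (s :: l).Nodup ∧ wWeight w s l = ddist adj w s t := by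
  classical
  set Wn : Set ℝ≥0∞ :=
    {x | ∃ l, DWalk adj s l t ∧ (s :: l).Nodup ∧ wWeight w s l = x} with hWn
  have hfin : Wn.Finite := by
    have : Wn ⊆ (fun l => wWeight w s l) '' {l : List V | l.length ≤ Fintype.card V} := by
      rintro x ⟨l, hl, hnd, rfl⟩
      refine ⟨l, ?_, rfl⟩
      have := List.Nodup.length_le_card (hnd.sublist (List.sublist_cons_self s l))
      simp only [Set.mem_setOf_eq]
      omega
    exact Set.Finite.subset (Set.Finite.image _ (List.finite_length_le V _)) this
  obtain ⟨l0, hl0⟩ := h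
  obtain ⟨l1, hw1, hn1, -, -⟩ := dwalk_nodup (w := w) hl0
  have hne : Wn.Nonempty := ⟨_, l1, hw1, hn1, rfl⟩
  have hmem := Set.Nonempty.csInf_mem hne hfin
  obtain ⟨l, hl, hnd, hwl⟩ := hmem
  refine ⟨l, hl, hnd, hwl.trans ?_⟩
  apply le_antisymm
  · apply le_sInf
    rintro x ⟨l', hl', rfl⟩
    obtain ⟨l'', hw'', hn'', -, hle''⟩ := dwalk_nodup (w := w) hl'
    exact le_trans (sInf_le ⟨l'', hw'', hn'', rfl⟩) hle''
  · exact sInf_le_sInf (by rintro x ⟨l', h1, -, h3⟩; exact ⟨l', h1, h3⟩)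

lemma ddist_triangle [Fintype V] :
    ddist adj w s t ≤ ddist adj w s v + ddist adj w v t := by
  by_cases h1 : DReach adj s v
  · by_cases h2 : DReach adj v t
    · obtain ⟨la, hla, -, hwa⟩ := exists_shortest (w := w) h1
      obtain ⟨lb, hlb, -, hwb⟩ := exists_shortest (w := w) h2
      calc ddist adj w s t ≤ wWeight w s (la ++ lb) := ddist_le (dwalk_append hla hlb)
        _ = _ := by rw [wWeight_append hla, hwa, hwb]
    · rw [ddist_eq_top_of_not_reach h2]; simp
  · rw [ddist_eq_top_of_not_reach h1]; simp

end Walks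

section Snoc
variable {V : Type} {adj : V → V → Prop} {w : V → V → ℝ≥0∞} {s t u v : V} {l m : List V}

lemma dwalk_snoc (h : DWalk adj s l u) (he : adj u v) : DWalk adj s (l ++ [v]) v :=
  dwalk_append h ⟨he, rfl⟩

lemma wWeight_snoc (h : DWalk adj s l u) :
    wWeight w s (l ++ [v]) = wWeight w s l + w u v := by
  rw [wWeight_append h]; simp [wWeight]

lemma dwalk_concat_elim (h : DWalk adj s (m ++ [v]) t) :
    t = v ∧ ∃ u, DWalk adj s m u ∧ adj u v ∧
      wWeight w s (m ++ [v]) = wWeight w s m + w u v := by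
  induction m generalizing s with
  | nil =>
      obtain ⟨h1, h2⟩ := h
      cases h2
      exact ⟨rfl, s, rfl, h1, by simp [wWeight]⟩
  | cons a l ih =>
      obtain ⟨h1, h2⟩ := h
      obtain ⟨ht, u, hw, he, hwt⟩ := ih h2
      subst ht
      refine ⟨rfl, u, ⟨h1, hw⟩, he, ?_⟩
      show w s a + wWeight w a (l ++ [t]) = w s a + wWeight w a l + w u t
      rw [hwt, add_assoc]

lemma dwalk_reverse :
    ∀ {s : V} {l : List V} {t : V}, DWalk adj s l t →
      DWalk (fun a b => adj b a) t ((s :: l).dropLast.reverse) s ∧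
      wWeight (fun a b => w b a) t ((s :: l).dropLast.reverse) = wWeight w s l := by
  intro s l
  induction l generalizing s with
  | nil => intro t h; cases h; exact ⟨rfl, by simp [wWeight]⟩
  | cons a l ih =>
      intro t h
      obtain ⟨hw, hwt⟩ := ih h.2
      have hd : (s :: a :: l).dropLast.reverse = (a :: l).dropLast.reverse ++ [s] := by
        rw [List.dropLast_cons₂, List.reverse_cons]
      constructor
      · rw [hd]; exact dwalk_snoc hw h.1
      · rw [hd, wWeight_snoc hw, hwt]
        show wWeight w a l + w s a = w s a + wWeight w a l
        rw [add_comm]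

lemma ddist_flip_le : ddist (fun a b => adj b a) (fun a b => w b a) t s ≤ ddist adj w s t := by
  apply le_sInf
  rintro x ⟨l, hl, rfl⟩
  obtain ⟨hw, hwt⟩ := dwalk_reverse hl
  exact le_trans (sInf_le ⟨_, hw, rfl⟩) (le_of_eq hwt)

lemma ddist_flip : ddist (fun a b => adj b a) (fun a b => w b a) t s = ddist adj w s t :=
  le_antisymm ddist_flip_le ddist_flip_le

end Snoc

section Tree
variable {V : Type} [Fintype V] [DecidableEq V] [Nonempty V]
  {w : V → V → ℝ≥0∞}

lemma tree_out (adj : V → V → Prop) (w : V → V → ℝ≥0∞) (r : V) :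
    ∃ T : Finset (V × V), (∀ e ∈ T, adj e.1 e.2) ∧ T.card ≤ Fintype.card V ∧
      ∀ t, ddist adj w r t ≠ ⊤ →
        ∃ l, DWalk (fun a b => (a, b) ∈ T) r l t ∧ wWeight w r l = ddist adj w r t := by
  classical
  set Pk : V → ℕ → Prop := fun t k => ∃ l, DWalk adj r l t ∧
    wWeight w r l = ddist adj w r t ∧ l.length = k with hPk
  have hEx : ∀ t, ddist adj w r t ≠ ⊤ → ∃ k, Pk t k := by
    intro t ht
    obtain ⟨l, hl, -, hwl⟩ := exists_shortest (w := w) (dreach_of_ddist_ne_top ht)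
    exact ⟨l.length, l, hl, hwl, rfl⟩
  set mlen : V → ℕ := fun t => if h : ∃ k, Pk t k then Nat.find h else 0 with hmlen
  have key : ∀ t, ∃ u : V, ddist adj w r t ≠ ⊤ → t ≠ r →
      adj u t ∧ ddist adj w r u ≠ ⊤ ∧ ddist adj w r u + w u t = ddist adj w r t ∧
      mlen u < mlen t := by
    intro t
    by_cases ht : ddist adj w r t ≠ ⊤ ∧ t ≠ r
    · obtain ⟨ht1, ht2⟩ := ht
      have hex := hEx t ht1
      have hspec : Pk t (Nat.find hex) := Nat.find_spec hex
      obtain ⟨l, hl, hwl, hlen⟩ := hspec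
      -- l nonempty since t ≠ r
      have hlne : l ≠ [] := by rintro rfl; exact ht2 hl.symm
      obtain ⟨m, v, hml⟩ := l.eq_nil_or_concat.resolve_left hlne
      rw [List.concat_eq_append] at hml
      subst hml
      obtain ⟨rfl, u, hwm, he, hwt⟩ := dwalk_concat_elim hl
      have hru : ddist adj w r u ≤ wWeight w r m := ddist_le hwm
      have hwfin : wWeight w r m + w u t ≠ ⊤ := by rw [← hwt, hwl]; exact ht1
      have hmfin : wWeight w r m ≠ ⊤ := fun hc => hwfin (by simp [hc])
      have hedgefin : w u t ≠ ⊤ := fun hc => hwfin (by simp [hc])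
      have htri : ddist adj w r t ≤ ddist adj w r u + w u t := by
        calc ddist adj w r t ≤ ddist adj w r u + ddist adj w u t := ddist_triangle
          _ ≤ ddist adj w r u + w u t := by
              gcongr
              calc ddist adj w u t ≤ wWeight w u [t] := ddist_le ⟨he, rfl⟩
                _ = w u t := by simp [wWeight]
      have heq : ddist adj w r u + w u t = ddist adj w r t := by
        apply le_antisymm _ htri
        calc ddist adj w r u + w u t ≤ wWeight w r m + w u t := by gcongr
          _ = ddist adj w r t := by rw [← hwt, hwl]
      have hufin : ddist adj w r u ≠ ⊤ := by
        intro hc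
        rw [hc, top_add] at heq
        exact ht1 heq.symm
      -- wWeight w r m = ddist adj w r u
      have hwm_eq : wWeight w r m = ddist adj w r u := by
        apply le_antisymm _ hru
        have : ddist adj w r u + w u t = wWeight w r m + w u t := by
          rw [heq, ← hwl, hwt]
        by_contra hcon
        push_neg at hcon
        have : ddist adj w r u + w u t < wWeight w r m + w u t := by
          apply ENNReal.add_lt_add_right hedgefin
          exact lt_of_le_of_ne hru (by intro h; exact absurd h.symm (ne_of_gt hcon))
        rw [heq, ← hwl, hwt] at this
        exact lt_irrefl _ this
      have hPku : Pk u m.length := ⟨m, hwm, hwm_eq, rfl⟩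
      have hexu : ∃ k, Pk u k := ⟨_, hPku⟩
      refine ⟨u, fun _ _ => ⟨he, hufin, heq, ?_⟩⟩
      have h1 : mlen u ≤ m.length := by
        rw [hmlen]; simp only [hexu, dif_pos]
        exact Nat.find_le hPku
      have h2 : mlen t = m.length + 1 := by
        rw [hmlen]; simp only [hex, dif_pos]
        simp only [List.length_append, List.length_cons, List.length_nil] at hlen
        omega
      omega
    · exact ⟨Classical.arbitrary V, fun h1 h2 => absurd ⟨h1, h2⟩ ht⟩
  choose par hpar using key
  set D : Finset V := Finset.univ.filter (fun t => ddist adj w r t ≠ ⊤ ∧ t ≠ r) with hD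
  refine ⟨D.image (fun t => (par t, t)), ?_, ?_, ?_⟩
  · intro e he
    simp only [Finset.mem_image, hD, Finset.mem_filter, Finset.mem_univ, true_and] at he
    obtain ⟨t, ⟨ht1, ht2⟩, rfl⟩ := he
    exact (hpar t ht1 ht2).1
  · calc (D.image _).card ≤ D.card := Finset.card_image_le
      _ ≤ Finset.univ.card := Finset.card_filter_le _ _
      _ = Fintype.card V := rfl
  · have main : ∀ k t, ddist adj w r t ≠ ⊤ → mlen t ≤ k →
        ∃ l, DWalk (fun a b => (a, b) ∈ D.image (fun t => (par t, t))) r l t ∧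
          wWeight w r l = ddist adj w r t := by
      intro k
      induction k with
      | zero =>
          intro t ht hm
          rcases eq_or_ne t r with rfl | htr
          · exact ⟨[], rfl, by simp [wWeight, ddist_self]⟩
          · exfalso
            have := (hpar t ht htr).2.2.2
            omega
      | succ k ih =>
          intro t ht hm
          rcases eq_or_ne t r with rfl | htr
          · exact ⟨[], rfl, by simp [wWeight, ddist_self]⟩
          · obtain ⟨he, hufin, heq, hlt⟩ := hpar t ht htr
            obtain ⟨l, hwl, hwt⟩ := ih (par t) hufin (by omega)
            refine ⟨l ++ [t], dwalk_snoc hwl ?_, ?_⟩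
            · simp only [Finset.mem_image, hD, Finset.mem_filter, Finset.mem_univ, true_and]
              exact ⟨t, ⟨ht, htr⟩, rfl⟩
            · rw [wWeight_snoc hwl, hwt, heq]
    intro t ht
    exact main (mlen t) t ht le_rfl

lemma tree_in (adj : V → V → Prop) (w : V → V → ℝ≥0∞) (r : V) :
    ∃ T : Finset (V × V), (∀ e ∈ T, adj e.1 e.2) ∧ T.card ≤ Fintype.card V ∧
      ∀ s, ddist adj w s r ≠ ⊤ →
        ∃ l, DWalk (fun a b => (a, b) ∈ T) s l r ∧ wWeight w s l = ddist adj w s r := by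
  classical
  obtain ⟨T', hT1, hT2, hT3⟩ := tree_out (fun a b => adj b a) (fun a b => w b a) r
  refine ⟨T'.image Prod.swap, ?_, ?_, ?_⟩
  · intro e he
    simp only [Finset.mem_image] at he
    obtain ⟨e', he', rfl⟩ := he
    exact hT1 e' he'
  · exact le_trans Finset.card_image_le hT2
  · intro s hs
    have hs' : ddist (fun a b => adj b a) (fun a b => w b a) r s ≠ ⊤ := by
      rw [ddist_flip]; exact hs
    obtain ⟨l, hwl, hwt⟩ := hT3 s hs'
    obtain ⟨hrev, hrevw⟩ := dwalk_reverse hwl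
    refine ⟨(r :: l).dropLast.reverse, ?_, ?_⟩
    · apply dwalk_mono (adj := fun a b => ((b, a) ∈ T')) _ hrev
      intro a b hab
      simp only [Finset.mem_image]
      exact ⟨(b, a), hab, rfl⟩
    · rw [hrevw, hwt, ddist_flip]
end Tree

section WalkEdges
variable {V : Type} [DecidableEq V] {adj : V → V → Prop} {w : V → V → ℝ≥0∞} {s t : V} {l : List V}

def walkEdges (s : V) (l : List V) : List (V × V) := (s :: l).zip l

lemma walkEdges_length : (walkEdges s l).length ≤ l.length := by
  simp [walkEdges]

lemma walkEdges_cons (u : V) : walkEdges s (u :: l) = (s, u) :: walkEdges u l := rfl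

lemma walkEdges_sub (h : DWalk adj s l t) : ∀ e ∈ walkEdges s l, adj e.1 e.2 := by
  induction l generalizing s with
  | nil => intro e he; simp [walkEdges] at he
  | cons u l ih =>
      intro e he
      rw [walkEdges_cons, List.mem_cons] at he
      rcases he with rfl | he
      · exact h.1
      · exact ih h.2 e he

lemma dwalk_walkEdges (h : DWalk adj s l t) :
    DWalk (fun a b => (a, b) ∈ (walkEdges s l).toFinset) s l t := by
  induction l generalizing s with
  | nil => exact h
  | cons u l ih =>
      refine ⟨?_, ?_⟩
      · simp [walkEdges_cons]
      · refine dwalk_mono ?_ (ih h.2)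
        intro a b hab
        simp only [List.mem_toFinset] at hab ⊢
        rw [walkEdges_cons]
        exact List.mem_cons_of_mem _ hab

end WalkEdges

set_option linter.unusedSectionVars false

section Meas
open MeasureTheory
variable {V : Type} [Fintype V] [DecidableEq V]

lemma measSet_all (s : Set (V → Bool)) : MeasurableSet s := by
  have hsing : ∀ f : V → Bool, MeasurableSet ({f} : Set (V → Bool)) := by
    intro f
    rw [← Set.univ_pi_singleton f]
    exact MeasurableSet.univ_pi (fun v => measurableSet_singleton _)
  have : s = ⋃ f ∈ s, {f} := by simp
  rw [this]
  exact MeasurableSet.biUnion (Set.to_countable _) (fun f _ => hsing f)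

variable {q : ℝ≥0∞} {hq : q ≤ 1}

lemma bernp_false (hq : q ≤ 1) : (PMF.bernoulli q.toNNReal (by simpa using ENNReal.toNNReal_mono ENNReal.one_ne_top hq)) false = 1 - q := by
  refine Eq.trans (PMF.bernoulli_apply _ _) ?_
  simp [ENNReal.coe_sub, ENNReal.coe_toNNReal (ne_top_of_le_ne_top ENNReal.one_ne_top hq)]

lemma bernp_true (hq : q ≤ 1) : (PMF.bernoulli q.toNNReal (by simpa using ENNReal.toNNReal_mono ENNReal.one_ne_top hq)) true = q := by
  refine Eq.trans (PMF.bernoulli_apply _ _) ?_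
  simp [ENNReal.coe_sub, ENNReal.coe_toNNReal (ne_top_of_le_ne_top ENNReal.one_ne_top hq)]

lemma bern_false : (PMF.bernoulli q.toNNReal (by simpa using ENNReal.toNNReal_mono ENNReal.one_ne_top hq)).toMeasure {false} = 1 - q := by
  rw [PMF.toMeasure_apply_singleton _ _ (measurableSet_singleton _)]
  exact bernp_false hq

lemma bern_true : (PMF.bernoulli q.toNNReal (by simpa using ENNReal.toNNReal_mono ENNReal.one_ne_top hq)).toMeasure {true} = q := by
  rw [PMF.toMeasure_apply_singleton _ _ (measurableSet_singleton _)]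
  exact bernp_true hq

lemma bernoulliSample_false_on (S : Finset V) :
    bernoulliSample V q hq {f | ∀ v ∈ S, f v = false} = (1 - q) ^ S.card := by
  have hset : {f : V → Bool | ∀ v ∈ S, f v = false} =
      Set.univ.pi (fun v => if v ∈ S then {false} else Set.univ) := by
    ext f
    simp only [Set.mem_setOf_eq, Set.mem_pi, Set.mem_univ, true_implies]
    constructor
    · intro h v
      by_cases hv : v ∈ S
      · simp [hv, h v hv]
      · simp [hv]
    · intro h v hv
      have := h v
      simp [hv] at this
      exact this
  rw [hset, bernoulliSample, Measure.pi_pi]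
  have : ∀ v : V, (PMF.bernoulli q.toNNReal (by simpa using ENNReal.toNNReal_mono ENNReal.one_ne_top hq)).toMeasure (if v ∈ S then {false} else Set.univ)
      = if v ∈ S then 1 - q else 1 := by
    intro v
    by_cases hv : v ∈ S <;> simp [hv, bern_false, bernp_false hq, bernp_true hq, add_tsub_cancel_of_le hq]
  rw [Finset.prod_congr rfl (fun v _ => this v), Finset.prod_ite_mem,
    Finset.univ_inter, Finset.prod_const]

lemma bernoulliSample_true_at (v : V) :
    bernoulliSample V q hq {f | f v = true} = q := by
  have hset : {f : V → Bool | f v = true} =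
      Set.univ.pi (fun u => if u = v then {true} else Set.univ) := by
    ext f
    simp only [Set.mem_setOf_eq, Set.mem_pi, Set.mem_univ, true_implies]
    constructor
    · intro h u
      by_cases hu : u = v
      · subst hu; simp [h]
      · simp [hu]
    · intro h
      have := h v
      simpa using this
  rw [hset, bernoulliSample, Measure.pi_pi]
  have : ∀ u : V, (PMF.bernoulli q.toNNReal (by simpa using ENNReal.toNNReal_mono ENNReal.one_ne_top hq)).toMeasure (if u = v then {true} else Set.univ)
      = if u = v then q else 1 := by
    intro u
    by_cases hu : u = v <;> simp [hu, bern_true, bernp_false hq, bernp_true hq, add_tsub_cancel_of_le hq]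
  rw [Finset.prod_congr rfl (fun u _ => this u)]
  simp

instance : IsProbabilityMeasure (bernoulliSample V q hq) := by
  rw [bernoulliSample]; infer_instance

noncomputable local instance : MeasurableSingletonClass (V → Bool) :=
  ⟨fun f => measSet_all {f}⟩

lemma bernoulliSample_integrable (g : (V → Bool) → ℝ) :
    Integrable g (bernoulliSample V q hq) := Integrable.of_finite

lemma bernoulliSample_integral_ite (A : Set (V → Bool)) [DecidablePred (· ∈ A)] :
    ∫ f, (if f ∈ A then (1 : ℝ) else 0) ∂(bernoulliSample V q hq) =
      (bernoulliSample V q hq A).toReal := by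
  rw [← measureReal_def, ← integral_indicator_one (measSet_all A)]
  congr 1
  ext f
  by_cases h : f ∈ A <;> simp [h]

end Meas

lemma one_sub_pow_le_aux (r : ℝ) (hr0 : 0 ≤ r) (hr1 : r ≤ 1) (k : ℕ) (hk : 1 ≤ (k : ℝ) * r) :
    ENNReal.ofReal (1 - (Real.exp 1)⁻¹) ≤ 1 - (1 - ENNReal.ofReal r) ^ k := by
  have h1 : (1 : ℝ≥0∞) - ENNReal.ofReal r = ENNReal.ofReal (1 - r) := by
    rw [ENNReal.ofReal_sub _ hr0, ENNReal.ofReal_one]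
  rw [h1, ← ENNReal.ofReal_pow (by linarith)]
  have hreal : (1 - r) ^ k ≤ (Real.exp 1)⁻¹ := by
    calc (1 - r) ^ k ≤ (Real.exp (-r)) ^ k := by
          apply pow_le_pow_left₀ (by linarith)
          linarith [Real.add_one_le_exp (-r)]
      _ = Real.exp ((k : ℝ) * (-r)) := (Real.exp_nat_mul _ _).symm
      _ ≤ Real.exp (-1) := Real.exp_le_exp.2 (by nlinarith)
      _ = (Real.exp 1)⁻¹ := Real.exp_neg 1
  calc ENNReal.ofReal (1 - (Real.exp 1)⁻¹)
      = 1 - ENNReal.ofReal ((Real.exp 1)⁻¹) := by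
        rw [ENNReal.ofReal_sub _ (by positivity), ENNReal.ofReal_one]
    _ ≤ 1 - ENNReal.ofReal ((1 - r) ^ k) :=
        tsub_le_tsub_left (ENNReal.ofReal_le_ofReal hreal) _

lemma ofReal_one_sub_exp_le_one : ENNReal.ofReal (1 - (Real.exp 1)⁻¹) ≤ 1 := by
  rw [← ENNReal.ofReal_one]
  apply ENNReal.ofReal_le_ofReal
  have h : (0 : ℝ) ≤ (Real.exp 1)⁻¹ := inv_nonneg.2 (Real.exp_nonneg 1)
  linarith

lemma one_sub_exp_inv_nonneg : (0 : ℝ) ≤ 1 - (Real.exp 1)⁻¹ := by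
  have h1 : (1 : ℝ) ≤ Real.exp 1 := by linarith [Real.add_one_le_exp 1]
  have := inv_le_one_of_one_le₀ h1
  linarith


open MeasureTheory in
/-- Distance preserver with slack (Coppersmith–Elkin simple construction): with
`ℓ = n/√p` and `R` a random node sample of rate `1/ℓ = √p/n`, there is a subgraph `H(R)`
on at most `p·ℓ + 2n·|R|` edges — hence of expected size at most `3n·√p` — which exactly
preserves the distances of a subset `P'(R) ⊆ P` of expected size at least `(1 - 1/e)·p`. -/
theorem stmt5 {V : Type} [Fintype V] [DecidableEq V] [Nonempty V]
    (E : Finset (V × V)) (w : V → V → ℝ≥0∞) (P : Finset (V × V))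
    (hp1 : 1 ≤ P.card) (hpn : (P.card : ℝ) ≤ (Fintype.card V : ℝ) ^ 2) :
    ∃ (H : (V → Bool) → Finset (V × V)) (P' : (V → Bool) → Finset (V × V)),
      (∀ f, H f ⊆ E) ∧
      (∀ f, ((H f).card : ℝ) ≤
          P.card * ((Fintype.card V : ℝ) / Real.sqrt P.card) +
          2 * Fintype.card V * (Finset.univ.filter (fun v => f v = true)).card) ∧
      (∀ f, P' f ⊆ P) ∧
      (∀ f, ∀ q ∈ P' f,
        ddist (fun a b => (a, b) ∈ H f) w q.1 q.2 =
          ddist (fun a b => (a, b) ∈ E) w q.1 q.2) ∧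
      (1 - (Real.exp 1)⁻¹) * P.card ≤
        (∫ f, ((P' f).card : ℝ)
          ∂(bernoulliSample V (ENNReal.ofReal (Real.sqrt P.card / Fintype.card V))
            (by
              refine ENNReal.ofReal_le_one.mpr (div_le_one_of_le₀ ?_ (by positivity))
              calc Real.sqrt P.card
                  ≤ Real.sqrt ((Fintype.card V : ℝ) ^ 2) := Real.sqrt_le_sqrt hpn
                _ = (Fintype.card V : ℝ) := Real.sqrt_sq (by positivity)))) ∧
      (∫ f, ((H f).card : ℝ)
          ∂(bernoulliSample V (ENNReal.ofReal (Real.sqrt P.card / Fintype.card V))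
            (by
              refine ENNReal.ofReal_le_one.mpr (div_le_one_of_le₀ ?_ (by positivity))
              calc Real.sqrt P.card
                  ≤ Real.sqrt ((Fintype.card V : ℝ) ^ 2) := Real.sqrt_le_sqrt hpn
                _ = (Fintype.card V : ℝ) := Real.sqrt_sq (by positivity)))) ≤
        3 * Fintype.card V * Real.sqrt P.card := by
  classical
  have hn1 : 1 ≤ Fintype.card V := Fintype.card_pos
  have hnR : (0 : ℝ) < Fintype.card V := by exact_mod_cast hn1
  have hpR : (0 : ℝ) < P.card := by exact_mod_cast hp1
  have hsqp : (0 : ℝ) < Real.sqrt P.card := Real.sqrt_pos.2 hpR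
  set rr : ℝ := Real.sqrt P.card / Fintype.card V with hrr
  have hr0 : 0 ≤ rr := by positivity
  have hr1 : rr ≤ 1 := by
    rw [hrr, div_le_one hnR]
    calc Real.sqrt P.card ≤ Real.sqrt ((Fintype.card V : ℝ) ^ 2) := Real.sqrt_le_sqrt hpn
      _ = (Fintype.card V : ℝ) := Real.sqrt_sq (by positivity)
  -- adjacency of the full graph
  set adjE : V → V → Prop := fun a b => (a, b) ∈ E with hadjE
  -- shortest path trees
  choose Tout hTo1 hTo2 hTo3 using fun v => tree_out (V := V) adjE w v
  choose Tin hTi1 hTi2 hTi3 using fun v => tree_in (V := V) adjE w v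
  -- canonical shortest paths
  have hspex : ∀ s t : V, ∃ l, ddist adjE w s t ≠ ⊤ →
      DWalk adjE s l t ∧ (s :: l).Nodup ∧ wWeight w s l = ddist adjE w s t := by
    intro s t
    by_cases h : ddist adjE w s t ≠ ⊤
    · obtain ⟨l, h1, h2, h3⟩ := exists_shortest (w := w) (dreach_of_ddist_ne_top h)
      exact ⟨l, fun _ => ⟨h1, h2, h3⟩⟩
    · exact ⟨[], fun h' => absurd h' h⟩
  choose sp hsp using hspex
  set L : ℕ := ⌊(Fintype.card V : ℝ) / Real.sqrt P.card⌋₊ with hL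
  set isShort : V × V → Prop :=
    fun q => ddist adjE w q.1 q.2 ≠ ⊤ ∧ (sp q.1 q.2).length ≤ L with hisShort
  set SE : Finset (V × V) :=
    (P.filter isShort).biUnion (fun q => (walkEdges q.1 (sp q.1 q.2)).toFinset) with hSE
  set H : (V → Bool) → Finset (V × V) := fun f =>
    SE ∪ (Finset.univ.filter (fun v => f v = true)).biUnion (fun v => Tin v ∪ Tout v) with hH
  set P' : (V → Bool) → Finset (V × V) := fun f =>
    P.filter (fun q => ddist (fun a b => (a, b) ∈ H f) w q.1 q.2 = ddist adjE w q.1 q.2)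
    with hP'
  -- H f ⊆ E
  have hHE : ∀ f, H f ⊆ E := by
    intro f e he
    rw [hH, Finset.mem_union] at he
    rcases he with he | he
    · rw [hSE] at he
      rw [Finset.mem_biUnion] at he
      obtain ⟨q, hq, he⟩ := he
      rw [Finset.mem_filter] at hq
      rw [List.mem_toFinset] at he
      have := walkEdges_sub (hsp q.1 q.2 hq.2.1).1 e he
      exact this
    · rw [Finset.mem_biUnion] at he
      obtain ⟨v, -, he⟩ := he
      rw [Finset.mem_union] at he
      rcases he with he | he
      · exact hTi1 v e he
      · exact hTo1 v e he
  -- cardinality bound, ℕ then ℝ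
  have hHcardN : ∀ f, (H f).card ≤
      P.card * L + (Finset.univ.filter (fun v => f v = true)).card * (2 * Fintype.card V) := by
    intro f
    rw [hH]
    calc (SE ∪ _).card ≤ SE.card + _ := Finset.card_union_le _ _
      _ ≤ P.card * L + _ := by
          gcongr
          · rw [hSE]
            calc ((P.filter isShort).biUnion _).card
                ≤ ∑ q ∈ P.filter isShort, (walkEdges q.1 (sp q.1 q.2)).toFinset.card :=
                  Finset.card_biUnion_le
              _ ≤ ∑ q ∈ P.filter isShort, L := by
                  apply Finset.sum_le_sum
                  intro q hq
                  rw [Finset.mem_filter] at hq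
                  calc (walkEdges q.1 (sp q.1 q.2)).toFinset.card
                      ≤ (walkEdges q.1 (sp q.1 q.2)).length := List.toFinset_card_le _
                    _ ≤ (sp q.1 q.2).length := walkEdges_length
                    _ ≤ L := hq.2.2
              _ = (P.filter isShort).card * L := by rw [Finset.sum_const, smul_eq_mul]
              _ ≤ P.card * L := Nat.mul_le_mul_right _ (Finset.card_filter_le _ _)
          · calc ((Finset.univ.filter (fun v => f v = true)).biUnion fun v => Tin v ∪ Tout v).card
                ≤ ∑ v ∈ Finset.univ.filter (fun v => f v = true), (Tin v ∪ Tout v).card :=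
                  Finset.card_biUnion_le
              _ ≤ ∑ v ∈ Finset.univ.filter (fun v => f v = true), 2 * Fintype.card V := by
                  apply Finset.sum_le_sum
                  intro v _
                  calc (Tin v ∪ Tout v).card ≤ (Tin v).card + (Tout v).card :=
                      Finset.card_union_le _ _
                    _ ≤ 2 * Fintype.card V := by have := hTi2 v; have := hTo2 v; omega
              _ = _ := by rw [Finset.sum_const, smul_eq_mul]
  have hLle : (L : ℝ) ≤ (Fintype.card V : ℝ) / Real.sqrt P.card :=
    Nat.floor_le (by positivity)
  have hHcardR : ∀ f, ((H f).card : ℝ) ≤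
      P.card * ((Fintype.card V : ℝ) / Real.sqrt P.card) +
      2 * Fintype.card V * (Finset.univ.filter (fun v => f v = true)).card := by
    intro f
    have := hHcardN f
    calc ((H f).card : ℝ)
        ≤ (P.card * L + (Finset.univ.filter (fun v => f v = true)).card
            * (2 * Fintype.card V) : ℕ) := by exact_mod_cast this
      _ = P.card * (L : ℝ) + 2 * Fintype.card V
            * (Finset.univ.filter (fun v => f v = true)).card := by push_cast; ring
      _ ≤ _ := add_le_add_left (mul_le_mul_of_nonneg_left hLle (Nat.cast_nonneg _)) _
  -- preservation: lower bound always
  have hlow : ∀ f s t, ddist adjE w s t ≤ ddist (fun a b => (a, b) ∈ H f) w s t := by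
    intro f s t
    apply ddist_anti
    intro a b hab
    exact hHE f hab
  -- preserved whenever dE = ⊤
  have hpres_top : ∀ f s t, ddist adjE w s t = ⊤ →
      ddist (fun a b => (a, b) ∈ H f) w s t = ddist adjE w s t := by
    intro f s t h
    have := hlow f s t
    rw [h] at this ⊢
    exact top_le_iff.1 this
  -- preserved whenever short
  have hpres_short : ∀ f q, q ∈ P → isShort q →
      ddist (fun a b => (a, b) ∈ H f) w q.1 q.2 = ddist adjE w q.1 q.2 := by
    intro f q hqP hq
    obtain ⟨hfin, hlen⟩ := hq
    obtain ⟨hwalk, hnd, hwt⟩ := hsp q.1 q.2 hfin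
    apply le_antisymm _ (hlow f q.1 q.2)
    calc ddist (fun a b => (a, b) ∈ H f) w q.1 q.2
        ≤ wWeight w q.1 (sp q.1 q.2) := by
          apply ddist_le
          refine dwalk_mono ?_ (dwalk_walkEdges hwalk)
          intro a b hab
          simp only [hH]
          apply Finset.mem_union_left
          rw [hSE]
          exact Finset.mem_biUnion.2 ⟨q, Finset.mem_filter.2 ⟨hqP, hfin, hlen⟩, hab⟩
      _ = ddist adjE w q.1 q.2 := hwt
  -- preserved for long pairs hit by the sample
  have hpres_long : ∀ f (q : V × V), ddist adjE w q.1 q.2 ≠ ⊤ →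
      (∃ v, v ∈ q.1 :: sp q.1 q.2 ∧ f v = true) →
      ddist (fun a b => (a, b) ∈ H f) w q.1 q.2 = ddist adjE w q.1 q.2 := by
    rintro f q hfin ⟨v, hv, hfv⟩
    obtain ⟨hwalk, hnd, hwt⟩ := hsp q.1 q.2 hfin
    obtain ⟨la, lb, hla, hlb, hwsum⟩ := dwalk_split_at (w := w) hwalk hv
    have hw1 : ddist adjE w q.1 v ≤ wWeight w q.1 la := ddist_le hla
    have hw2 : ddist adjE w v q.2 ≤ wWeight w v lb := ddist_le hlb
    have hsumfin : wWeight w q.1 la + wWeight w v lb ≠ ⊤ := by rw [hwsum, hwt]; exact hfin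
    have hfin1 : ddist adjE w q.1 v ≠ ⊤ := by
      intro hc
      apply hsumfin
      have : wWeight w q.1 la = ⊤ := top_le_iff.1 (hc ▸ hw1)
      rw [this, top_add]
    have hfin2 : ddist adjE w v q.2 ≠ ⊤ := by
      intro hc
      apply hsumfin
      have : wWeight w v lb = ⊤ := top_le_iff.1 (hc ▸ hw2)
      rw [this, add_top]
    obtain ⟨l1, hl1, hwt1⟩ := hTi3 v q.1 hfin1
    obtain ⟨l2, hl2, hwt2⟩ := hTo3 v q.2 hfin2
    have hsubH : ∀ a b, (a, b) ∈ Tin v ∪ Tout v → (a, b) ∈ H f := by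
      intro a b hab
      simp only [hH]
      apply Finset.mem_union_right
      exact Finset.mem_biUnion.2
        ⟨v, Finset.mem_filter.2 ⟨Finset.mem_univ v, hfv⟩, hab⟩
    apply le_antisymm _ (hlow f q.1 q.2)
    have hm1 : DWalk (fun a b => (a, b) ∈ H f) q.1 l1 v :=
      dwalk_mono (fun a b hab => hsubH a b (Finset.mem_union_left _ hab)) hl1
    have hm2 : DWalk (fun a b => (a, b) ∈ H f) v l2 q.2 :=
      dwalk_mono (fun a b hab => hsubH a b (Finset.mem_union_right _ hab)) hl2
    calc ddist (fun a b => (a, b) ∈ H f) w q.1 q.2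
        ≤ wWeight w q.1 (l1 ++ l2) := ddist_le (dwalk_append hm1 hm2)
      _ = ddist adjE w q.1 v + ddist adjE w v q.2 := by
          rw [wWeight_append hl1, hwt1, hwt2]
      _ ≤ wWeight w q.1 la + wWeight w v lb := add_le_add hw1 hw2
      _ = ddist adjE w q.1 q.2 := by rw [hwsum, hwt]
  -- per-pair measure bound
  have hmeas : ∀ q ∈ P, ENNReal.ofReal (1 - (Real.exp 1)⁻¹) ≤
      bernoulliSample V (ENNReal.ofReal rr) (ENNReal.ofReal_le_one.mpr hr1)
        {f | ddist (fun a b => (a, b) ∈ H f) w q.1 q.2 = ddist adjE w q.1 q.2} := by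
    intro q hqP
    set Aq : Set (V → Bool) :=
      {f | ddist (fun a b => (a, b) ∈ H f) w q.1 q.2 = ddist adjE w q.1 q.2} with hAq
    by_cases hfin : ddist adjE w q.1 q.2 = ⊤
    · have : Aq = Set.univ := by
        ext f; simp only [hAq, Set.mem_setOf_eq, Set.mem_univ, iff_true]
        exact hpres_top f q.1 q.2 hfin
      rw [this]
      simp only [measure_univ]
      exact ofReal_one_sub_exp_le_one
    · by_cases hshort : (sp q.1 q.2).length ≤ L
      · have : Aq = Set.univ := by
          ext f; simp only [hAq, Set.mem_setOf_eq, Set.mem_univ, iff_true]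
          exact hpres_short f q hqP ⟨hfin, hshort⟩
        rw [this]
        simp only [measure_univ]
        exact ofReal_one_sub_exp_le_one
      · -- long pair
        obtain ⟨hwalk, hnd, hwt⟩ := hsp q.1 q.2 hfin
        set S : Finset V := (q.1 :: sp q.1 q.2).toFinset with hS
        have hcardS : S.card = (sp q.1 q.2).length + 1 := by
          rw [hS, List.toFinset_card_of_nodup hnd]
          simp
        have hsub : {f : V → Bool | ∀ v ∈ S, f v = false}ᶜ ⊆ Aq := by
          intro f hf
          simp only [Set.mem_compl_iff, Set.mem_setOf_eq, not_forall] at hf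
          obtain ⟨v, hvS, hfv⟩ := hf
          rw [hS, List.mem_toFinset] at hvS
          exact hpres_long f q hfin ⟨v, hvS, Bool.not_eq_false _ ▸ hfv⟩
        calc ENNReal.ofReal (1 - (Real.exp 1)⁻¹)
            ≤ 1 - (1 - ENNReal.ofReal rr) ^ S.card := by
              apply one_sub_pow_le_aux rr hr0 hr1
              have hk1 : ((Fintype.card V : ℝ) / Real.sqrt P.card) < L + 1 :=
                Nat.lt_floor_add_one _
              have hk2 : (L : ℝ) + 2 ≤ (S.card : ℝ) := by
                rw [hcardS]
                push_cast
                have : L + 1 ≤ (sp q.1 q.2).length := by omega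
                have := (Nat.cast_le (α := ℝ)).2 this
                push_cast at this
                linarith
              have hineq : (Fintype.card V : ℝ) / Real.sqrt P.card ≤ (S.card : ℝ) := by
                linarith
              have hprod : ((Fintype.card V : ℝ) / Real.sqrt P.card) * rr = 1 := by
                rw [hrr, div_mul_div_comm,
                  mul_comm (Real.sqrt (P.card : ℝ)) (Fintype.card V : ℝ),
                  div_self (ne_of_gt (mul_pos hnR hsqp))]
              calc (1 : ℝ) = ((Fintype.card V : ℝ) / Real.sqrt P.card) * rr := hprod.symm
                _ ≤ (S.card : ℝ) * rr := mul_le_mul_of_nonneg_right hineq hr0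
          _ = bernoulliSample V (ENNReal.ofReal rr) (ENNReal.ofReal_le_one.mpr hr1)
              {f : V → Bool | ∀ v ∈ S, f v = false}ᶜ := by
              rw [prob_compl_eq_one_sub (measSet_all _), bernoulliSample_false_on]
          _ ≤ _ := measure_mono hsub
  -- assemble
  refine ⟨H, P', hHE, hHcardR, fun f => Finset.filter_subset _ _, ?_, ?_, ?_⟩
  · intro f q hq
    rw [hP', Finset.mem_filter] at hq
    exact hq.2
  · -- expected number of preserved pairs
    have hfun : ∀ f : V → Bool, ((P' f).card : ℝ) =
        ∑ q ∈ P, (if f ∈ {g : V → Bool | ddist (fun a b => (a, b) ∈ H g) w q.1 q.2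
          = ddist adjE w q.1 q.2} then (1 : ℝ) else 0) := by
      intro f
      simp only [Set.mem_setOf_eq]
      rw [hP', Finset.sum_boole]
    calc (1 - (Real.exp 1)⁻¹) * P.card
        = ∑ _q ∈ P, (1 - (Real.exp 1)⁻¹) := by
          rw [Finset.sum_const, nsmul_eq_mul, mul_comm]
      _ ≤ ∑ q ∈ P, (bernoulliSample V (ENNReal.ofReal rr) (ENNReal.ofReal_le_one.mpr hr1)
            {f | ddist (fun a b => (a, b) ∈ H f) w q.1 q.2
              = ddist adjE w q.1 q.2}).toReal := by
          apply Finset.sum_le_sum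
          intro q hq
          have h1 := hmeas q hq
          have h2 := ENNReal.toReal_mono (measure_ne_top _ _) h1
          rwa [ENNReal.toReal_ofReal one_sub_exp_inv_nonneg] at h2
      _ = ∑ q ∈ P, ∫ f, (if f ∈ {g : V → Bool |
              ddist (fun a b => (a, b) ∈ H g) w q.1 q.2 = ddist adjE w q.1 q.2}
            then (1 : ℝ) else 0)
            ∂(bernoulliSample V (ENNReal.ofReal rr) (ENNReal.ofReal_le_one.mpr hr1)) := by
          apply Finset.sum_congr rfl
          intro q _
          rw [bernoulliSample_integral_ite]
      _ = ∫ f, ((P' f).card : ℝ)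
            ∂(bernoulliSample V (ENNReal.ofReal rr) (ENNReal.ofReal_le_one.mpr hr1)) := by
          rw [← integral_finset_sum _ (fun q _ => bernoulliSample_integrable _)]
          exact integral_congr_ae (Filter.Eventually.of_forall (fun f => (hfun f).symm))
      _ = _ := rfl
  · -- expected size of H
    have hRfun : ∀ f : V → Bool,
        ((Finset.univ.filter (fun v => f v = true)).card : ℝ) =
        ∑ v : V, (if f ∈ {g : V → Bool | g v = true} then (1 : ℝ) else 0) := by
      intro f
      simp only [Set.mem_setOf_eq]
      rw [Finset.sum_boole]
    have hpt : ∀ f : V → Bool, ((H f).card : ℝ) ≤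
        (P.card : ℝ) * ((Fintype.card V : ℝ) / Real.sqrt P.card) +
        2 * Fintype.card V * ∑ v : V, (if f ∈ {g : V → Bool | g v = true}
          then (1 : ℝ) else 0) := by
      intro f
      rw [← hRfun f]
      exact hHcardR f
    calc ∫ f, ((H f).card : ℝ)
          ∂(bernoulliSample V (ENNReal.ofReal rr) (ENNReal.ofReal_le_one.mpr hr1))
        ≤ ∫ f, ((P.card : ℝ) * ((Fintype.card V : ℝ) / Real.sqrt P.card) +
            2 * Fintype.card V * ∑ v : V, (if f ∈ {g : V → Bool | g v = true}
              then (1 : ℝ) else 0))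
            ∂(bernoulliSample V (ENNReal.ofReal rr) (ENNReal.ofReal_le_one.mpr hr1)) :=
          integral_mono (bernoulliSample_integrable _) (bernoulliSample_integrable _) hpt
      _ = (P.card : ℝ) * ((Fintype.card V : ℝ) / Real.sqrt P.card) +
            2 * Fintype.card V * ∑ v : V,
              (bernoulliSample V (ENNReal.ofReal rr) (ENNReal.ofReal_le_one.mpr hr1)
                {g : V → Bool | g v = true}).toReal := by
          rw [integral_add (integrable_const _) (bernoulliSample_integrable _),
            integral_const, integral_const_mul,
            integral_finset_sum _ (fun v _ => bernoulliSample_integrable _)]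
          simp only [probReal_univ, measure_univ, ENNReal.toReal_one, smul_eq_mul, one_mul]
          congr 1
          congr 1
          apply Finset.sum_congr rfl
          intro v _
          rw [bernoulliSample_integral_ite]
      _ = (P.card : ℝ) * ((Fintype.card V : ℝ) / Real.sqrt P.card) +
            2 * Fintype.card V * ((Fintype.card V : ℝ) * rr) := by
          congr 1
          congr 1
          rw [Finset.sum_congr rfl (fun v _ => by
            rw [bernoulliSample_true_at, ENNReal.toReal_ofReal hr0])]
          rw [Finset.sum_const, nsmul_eq_mul]
          simp
      _ = 3 * Fintype.card V * Real.sqrt P.card := by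
          have hps : (P.card : ℝ) / Real.sqrt P.card = Real.sqrt P.card := Real.div_sqrt
          have e1 : (Fintype.card V : ℝ) * rr = Real.sqrt P.card := by
            rw [hrr, mul_div_cancel₀ _ (ne_of_gt hnR)]
          have e2 : (P.card : ℝ) * ((Fintype.card V : ℝ) / Real.sqrt P.card)
              = Real.sqrt P.card * Fintype.card V := by
            calc (P.card : ℝ) * ((Fintype.card V : ℝ) / Real.sqrt P.card)
                = ((P.card : ℝ) / Real.sqrt P.card) * Fintype.card V := by ring
              _ = Real.sqrt P.card * Fintype.card V := by rw [hps]
          rw [e1, e2]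
          ring
end

section
/- Let G be an undirected unweighted graph, H a d-initialization of G, and π a shortest path in G that is missing x edges in H (i.e., x edges of π are not in H). Then the number of nodes of G that are adjacent in H to some node of π is at least x·d/6. -/
/-- `H` is a `d`-initialization of `G`: a subgraph obtained by choosing, for each node `v`,
`min d (deg_G v)` edges incident to `v` (in particular all incident edges when
`deg_G v ≤ d`), and taking the union of all chosen edges. -/
def IsDInit {V : Type} [Fintype V] [DecidableEq V] (G H : SimpleGraph V)
    [DecidableRel G.Adj] [DecidableRel H.Adj] (d : ℕ) : Prop :=
  H ≤ G ∧ ∃ c : V → Finset (Sym2 V),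
    (∀ v, c v ⊆ G.incidenceFinset v) ∧
    (∀ v, (c v).card = min d (G.degree v)) ∧
    H.edgeFinset = Finset.univ.biUnion c

namespace Stmt8Aux

open SimpleGraph Finset

set_option linter.unusedSectionVars false

variable {V : Type} [DecidableEq V] {G : SimpleGraph V}

lemma dist_triangle' {u v w : V} (h1 : G.Reachable u v) (h2 : G.Reachable v w) :
    G.dist u w ≤ G.dist u v + G.dist v w := by
  obtain ⟨p, hp⟩ := h1.exists_walk_length_eq_dist
  obtain ⟨q, hq⟩ := h2.exists_walk_length_eq_dist
  calc G.dist u w ≤ (p.append q).length := SimpleGraph.dist_le _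
  _ = _ := by rw [SimpleGraph.Walk.length_append, hp, hq]

lemma length_take_add_drop {a b : V} (W : G.Walk a b) {v : V} (hv : v ∈ W.support) :
    (W.takeUntil v hv).length + (W.dropUntil v hv).length = W.length := by
  have := congrArg Walk.length (W.take_spec hv)
  rwa [Walk.length_append] at this

lemma dist_split {a b : V} (W : G.Walk a b) (hW : W.length = G.dist a b)
    {v : V} (hv : v ∈ W.support) :
    G.dist a v = (W.takeUntil v hv).length ∧ G.dist v b = (W.dropUntil v hv).length := by
  have hsum := length_take_add_drop W hv
  have h1 : G.dist a v ≤ (W.takeUntil v hv).length := SimpleGraph.dist_le _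
  have h2 : G.dist v b ≤ (W.dropUntil v hv).length := SimpleGraph.dist_le _
  have h3 := dist_triangle' (G := G) ⟨W.takeUntil v hv⟩ ⟨W.dropUntil v hv⟩
  omega

lemma dist_inj {a b : V} (W : G.Walk a b) (hW : W.length = G.dist a b)
    {v w : V} (hv : v ∈ W.support) (hw : w ∈ W.support)
    (hd : G.dist a v = G.dist a w) : v = w := by
  obtain ⟨h1, h2⟩ := dist_split W hW hv
  have hw0 := hw
  rw [← W.take_spec hv] at hw
  rcases (Walk.mem_support_append_iff _ _).1 hw with hw' | hw'
  · have hp : (W.takeUntil v hv).length = G.dist a v := h1.symm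
    obtain ⟨g1, g2⟩ := dist_split _ hp hw'
    have s3 := length_take_add_drop (W.takeUntil v hv) hw'
    exact (Walk.eq_of_length_eq_zero (p := (W.takeUntil v hv).dropUntil w hw') (by omega)).symm
  · have hq : (W.dropUntil v hv).length = G.dist v b := h2.symm
    obtain ⟨g1, g2⟩ := dist_split _ hq hw'
    have s3 := length_take_add_drop (W.dropUntil v hv) hw'
    obtain ⟨k1, k2⟩ := dist_split W hW hw0
    have s1 := length_take_add_drop W hv
    have s2 := length_take_add_drop W hw0
    exact Walk.eq_of_length_eq_zero (p := (W.dropUntil v hv).takeUntil w hw') (by omega)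

lemma adj_dist_le {a u w : V} (hadj : G.Adj u w) (hr : G.Reachable a u) :
    G.dist a w ≤ G.dist a u + 1 := by
  have h2 : G.dist u w ≤ 1 := by
    have := SimpleGraph.dist_le (Walk.cons hadj Walk.nil)
    simpa using this
  have := dist_triangle' hr ⟨Walk.cons hadj Walk.nil⟩
  omega

lemma edge_step {a b : V} (W : G.Walk a b) (hW : W.length = G.dist a b)
    {e : Sym2 V} (he : e ∈ W.edges) :
    ∃ u w, e = s(u, w) ∧ u ∈ W.support ∧ w ∈ W.support ∧ G.dist a w = G.dist a u + 1 := by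
  induction e using Sym2.ind with
  | _ u w =>
    have hadj : G.Adj u w := W.adj_of_mem_edges he
    have hu : u ∈ W.support := W.fst_mem_support_of_mem_edges he
    have hws : w ∈ W.support := W.snd_mem_support_of_mem_edges he
    have hne : G.dist a u ≠ G.dist a w := fun h => hadj.ne (dist_inj W hW hu hws h)
    have h1 : G.dist a w ≤ G.dist a u + 1 := adj_dist_le hadj ⟨W.takeUntil u hu⟩
    have h2 : G.dist a u ≤ G.dist a w + 1 := adj_dist_le hadj.symm ⟨W.takeUntil w hws⟩
    rcases Nat.lt_or_ge (G.dist a u) (G.dist a w) with h | h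
    · exact ⟨u, w, rfl, hu, hws, by omega⟩
    · exact ⟨w, u, Sym2.eq_swap, hws, hu, by omega⟩

/-- The larger of the two distances from `s` to the endpoints of an edge. -/
noncomputable def distMax (G : SimpleGraph V) (a : V) : Sym2 V → ℕ :=
  Sym2.lift ⟨fun u w => max (G.dist a u) (G.dist a w), fun u w => max_comm _ _⟩

@[simp] lemma distMax_mk (a u w : V) :
    distMax G a s(u, w) = max (G.dist a u) (G.dist a w) := rfl

lemma distMax_injOn {a b : V} (W : G.Walk a b) (hW : W.length = G.dist a b) :
    ∀ e1 ∈ W.edges, ∀ e2 ∈ W.edges, distMax G a e1 = distMax G a e2 → e1 = e2 := by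
  intro e1 he1 e2 he2 hD
  obtain ⟨u1, w1, rfl, hu1, hw1, hd1⟩ := edge_step W hW he1
  obtain ⟨u2, w2, rfl, hu2, hw2, hd2⟩ := edge_step W hW he2
  rw [distMax_mk, distMax_mk] at hD
  have hww : w1 = w2 := dist_inj W hW hw1 hw2 (by omega)
  have huu : u1 = u2 := dist_inj W hW hu1 hu2 (by omega)
  rw [hww, huu]

lemma edges_at_vertex {a b : V} (W : G.Walk a b) (hW : W.length = G.dist a b) (v : V) :
    (W.edges.toFinset.filter (fun e => v ∈ e)).card ≤ 2 := by
  have h := Finset.card_le_card_of_injOn (distMax G a)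
    (s := W.edges.toFinset.filter (fun e => v ∈ e))
    (t := ({G.dist a v, G.dist a v + 1} : Finset ℕ))
    (by
      intro e he
      rw [Finset.mem_coe, Finset.mem_filter, List.mem_toFinset] at he
      obtain ⟨he, hve⟩ := he
      obtain ⟨u, w, heq, hu, hw, hd⟩ := edge_step W hW he
      subst heq
      rcases Sym2.mem_iff.1 hve with rfl | rfl
      · simp only [Finset.mem_coe, distMax_mk, Finset.mem_insert, Finset.mem_singleton]
        omega
      · simp only [Finset.mem_coe, distMax_mk, Finset.mem_insert, Finset.mem_singleton]
        omega)
    (by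
      intro e1 h1 e2 h2 h
      have m1 := (Finset.mem_filter.1 h1).1
      have m2 := (Finset.mem_filter.1 h2).1
      exact distMax_injOn W hW e1 (List.mem_toFinset.1 m1) e2 (List.mem_toFinset.1 m2) h)
  refine h.trans ?_
  exact (Finset.card_insert_le _ _).trans (by simp)

lemma support_adj_card_le {a b : V} [Fintype V] [DecidableRel G.Adj] (W : G.Walk a b) (hW : W.length = G.dist a b)
    (y : V) (hry : G.Reachable a y) :
    (W.support.toFinset.filter (fun v => G.Adj v y)).card ≤ 3 := by
  have h := Finset.card_le_card_of_injOn (G.dist a)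
    (s := W.support.toFinset.filter (fun v => G.Adj v y))
    (t := Finset.Icc (G.dist a y - 1) (G.dist a y + 1))
    (by
      intro v hv
      rw [Finset.mem_coe, Finset.mem_filter, List.mem_toFinset] at hv
      obtain ⟨hv, hadj⟩ := hv
      have h1 : G.dist a v ≤ G.dist a y + 1 := adj_dist_le hadj.symm hry
      have h2 : G.dist a y ≤ G.dist a v + 1 := adj_dist_le hadj ⟨W.takeUntil v hv⟩
      rw [Finset.mem_coe, Finset.mem_Icc]
      omega)
    (by
      intro v1 h1 v2 h2 h
      have m1 := List.mem_toFinset.1 (Finset.mem_filter.1 h1).1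
      have m2 := List.mem_toFinset.1 (Finset.mem_filter.1 h2).1
      exact dist_inj W hW m1 m2 h)
  refine h.trans ?_
  rw [Nat.card_Icc]
  omega

lemma deg_bound {d : ℕ} [Fintype V] {H : SimpleGraph V}
    [DecidableRel G.Adj] [DecidableRel H.Adj] (hH : IsDInit G H d)
    {v : V} {e : Sym2 V} (heG : e ∈ G.edgeSet) (heH : e ∉ H.edgeFinset) (hve : v ∈ e) :
    d ≤ H.degree v := by
  obtain ⟨hle, c, hsub, hcard, hun⟩ := hH
  by_cases hdeg : G.degree v ≤ d
  · exfalso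
    have hcv : c v = G.incidenceFinset v := by
      apply Finset.eq_of_subset_of_card_le (hsub v)
      rw [hcard v, min_eq_right hdeg, card_incidenceFinset_eq_degree]
    have hmem : e ∈ c v := by
      rw [hcv, mem_incidenceFinset]
      exact ⟨heG, hve⟩
    exact heH (hun ▸ Finset.mem_biUnion.2 ⟨v, Finset.mem_univ v, hmem⟩)
  · have h1 : c v ⊆ H.incidenceFinset v := by
      intro e' he'
      rw [mem_incidenceFinset]
      refine ⟨?_, ((G.mem_incidenceFinset (v := v) e').1 (hsub v he')).2⟩
      have : e' ∈ H.edgeFinset := hun ▸ Finset.subset_biUnion_of_mem c (Finset.mem_univ v) he'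
      exact mem_edgeFinset.1 this
    calc d = min d (G.degree v) := (min_eq_left (le_of_not_ge hdeg)).symm
    _ = (c v).card := (hcard v).symm
    _ ≤ (H.incidenceFinset v).card := Finset.card_le_card h1
    _ = H.degree v := card_incidenceFinset_eq_degree _ _

lemma sum_filter_card_comm {α β : Type*} (A : Finset α) (B : Finset β)
    (r : α → β → Prop) [∀ a b, Decidable (r a b)] :
    ∑ a ∈ A, (B.filter (fun b => r a b)).card
      = ∑ b ∈ B, (A.filter (fun a => r a b)).card := by
  simp only [Finset.card_filter]
  exact Finset.sum_comm

end Stmt8Aux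

open SimpleGraph Finset Stmt8Aux

/-- If `H` is a `d`-initialization of `G` and a shortest path `π` of `G` is missing `x`
edges in `H`, then at least `x·d/6` nodes are adjacent in `H` to some node of `π`. -/
theorem stmt8 {V : Type} [Fintype V] [DecidableEq V] (G H : SimpleGraph V)
    [DecidableRel G.Adj] [DecidableRel H.Adj] (d : ℕ) (hH : IsDInit G H d)
    {s t : V} (π : G.Walk s t) (hshort : π.length = G.dist s t)
    (x : ℕ) (hx : x = (π.edges.toFinset \ H.edgeFinset).card) :
    ((x : ℝ) * d) / 6 ≤ ({y : V | ∃ v ∈ π.support, H.Adj y v}.ncard : ℝ) := by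
  classical
  have hle : H ≤ G := hH.1
  set M : Finset (Sym2 V) := π.edges.toFinset \ H.edgeFinset with hMdef
  set P : Finset V := π.support.toFinset with hPdef
  set N : Finset V := Finset.univ.filter (fun y => ∃ v ∈ π.support, H.Adj y v) with hNdef
  set S : Finset V := Finset.univ.filter (fun v => ∃ e ∈ M, v ∈ e) with hSdef
  -- x ≤ S.card
  have hxS : x ≤ S.card := by
    have h2 : ∀ e ∈ M, (Finset.univ.filter (fun v => v ∈ e)).card = 2 := by
      intro e he
      have heG : e ∈ G.edgeSet :=
        π.edges_subset_edgeSet (List.mem_toFinset.1 (Finset.mem_sdiff.1 he).1)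
      induction e using Sym2.ind with
      | _ a b =>
        have hab : a ≠ b := (G.mem_edgeSet.1 heG).ne
        have hfe : Finset.univ.filter (fun v => v ∈ s(a, b)) = {a, b} := by
          ext v
          simp [Sym2.mem_iff]
        rw [hfe, Finset.card_insert_of_notMem (by simp [hab]), Finset.card_singleton]
    have hsum : ∑ e ∈ M, (Finset.univ.filter (fun v => v ∈ e)).card = 2 * M.card := by
      rw [Finset.sum_congr rfl h2, Finset.sum_const, smul_eq_mul, mul_comm]
    have hswap := sum_filter_card_comm M (Finset.univ : Finset V) (fun e v => v ∈ e)
    have hzero : ∀ v ∈ (Finset.univ : Finset V), v ∉ S →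
        (M.filter (fun e => v ∈ e)).card = 0 := by
      intro v _ hv
      rw [Finset.card_eq_zero, Finset.filter_eq_empty_iff]
      intro e he hve
      exact hv (Finset.mem_filter.2 ⟨Finset.mem_univ v, e, he, hve⟩)
    have hrestr : ∑ v ∈ (Finset.univ : Finset V), (M.filter (fun e => v ∈ e)).card
        = ∑ v ∈ S, (M.filter (fun e => v ∈ e)).card :=
      (Finset.sum_subset (Finset.subset_univ S) hzero).symm
    have hfib2 : ∀ v : V, (M.filter (fun e => v ∈ e)).card ≤ 2 := by
      intro v
      have hsub2 : M.filter (fun e => v ∈ e) ⊆ π.edges.toFinset.filter (fun e => v ∈ e) :=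
        Finset.filter_subset_filter _ Finset.sdiff_subset
      exact (Finset.card_le_card hsub2).trans (edges_at_vertex π hshort v)
    have hS2 : ∑ v ∈ S, (M.filter (fun e => v ∈ e)).card ≤ 2 * S.card := by
      calc ∑ v ∈ S, (M.filter (fun e => v ∈ e)).card ≤ ∑ _v ∈ S, 2 :=
            Finset.sum_le_sum (fun v _ => hfib2 v)
      _ = 2 * S.card := by rw [Finset.sum_const, smul_eq_mul, mul_comm]
    omega
  -- each vertex of S has H-degree at least d
  have hdS : ∀ v ∈ S, d ≤ H.degree v := by
    intro v hvS
    obtain ⟨-, e, heM, hve⟩ := Finset.mem_filter.1 hvS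
    obtain ⟨heπ, heH⟩ := Finset.mem_sdiff.1 heM
    exact deg_bound hH (π.edges_subset_edgeSet (List.mem_toFinset.1 heπ)) heH hve
  -- S ⊆ P
  have hSP : S ⊆ P := by
    intro v hvS
    obtain ⟨-, e, heM, hve⟩ := Finset.mem_filter.1 hvS
    obtain ⟨heπ, -⟩ := Finset.mem_sdiff.1 heM
    obtain ⟨u, w, heq, hu, hw, -⟩ := edge_step π hshort (List.mem_toFinset.1 heπ)
    subst heq
    rcases Sym2.mem_iff.1 hve with rfl | rfl
    · exact List.mem_toFinset.2 hu
    · exact List.mem_toFinset.2 hw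
  -- counting degrees over P
  have hdegEq : ∀ v : V, H.degree v = (Finset.univ.filter (fun y => H.Adj v y)).card := by
    intro v
    rw [SimpleGraph.degree]
    congr 1
    ext y
    simp [SimpleGraph.mem_neighborFinset]
  have chain3 : ∑ v ∈ P, H.degree v
      = ∑ y ∈ (Finset.univ : Finset V), (P.filter (fun v => H.Adj v y)).card := by
    simp_rw [hdegEq]
    exact sum_filter_card_comm P Finset.univ (fun v y => H.Adj v y)
  have hNzero : ∀ y ∈ (Finset.univ : Finset V), y ∉ N →
      (P.filter (fun v => H.Adj v y)).card = 0 := by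
    intro y _ hy
    rw [Finset.card_eq_zero, Finset.filter_eq_empty_iff]
    intro v hv hadj
    exact hy (Finset.mem_filter.2 ⟨Finset.mem_univ y, v, List.mem_toFinset.1 hv, hadj.symm⟩)
  have chain4 : ∑ y ∈ (Finset.univ : Finset V), (P.filter (fun v => H.Adj v y)).card
      = ∑ y ∈ N, (P.filter (fun v => H.Adj v y)).card :=
    (Finset.sum_subset (Finset.subset_univ N) hNzero).symm
  have hy3 : ∀ y ∈ N, (P.filter (fun v => H.Adj v y)).card ≤ 3 := by
    intro y hyN
    obtain ⟨-, v0, hv0, hadj0⟩ := Finset.mem_filter.1 hyN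
    have hr0 : G.Reachable s v0 := ⟨π.takeUntil v0 hv0⟩
    have hry : G.Reachable s y :=
      hr0.trans ⟨Walk.cons (hle hadj0).symm Walk.nil⟩
    have hsub3 : P.filter (fun v => H.Adj v y) ⊆ P.filter (fun v => G.Adj v y) :=
      Finset.filter_subset_filter _ (fun v hv => hv) |>.trans
        (by intro v hv; exact Finset.mem_filter.2 ⟨(Finset.mem_filter.1 hv).1,
              hle (Finset.mem_filter.1 hv).2⟩)
    exact (Finset.card_le_card hsub3).trans (support_adj_card_le π hshort y hry)
  -- combine the chain in ℕ
  have key : x * d ≤ 3 * N.card := by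
    calc x * d ≤ S.card * d := Nat.mul_le_mul_right d hxS
    _ = ∑ _v ∈ S, d := by rw [Finset.sum_const, smul_eq_mul, mul_comm]
    _ ≤ ∑ v ∈ S, H.degree v := Finset.sum_le_sum hdS
    _ ≤ ∑ v ∈ P, H.degree v := Finset.sum_le_sum_of_subset hSP
    _ = ∑ y ∈ N, (P.filter (fun v => H.Adj v y)).card := by rw [chain3, chain4]
    _ ≤ ∑ _y ∈ N, 3 := Finset.sum_le_sum hy3
    _ = 3 * N.card := by rw [Finset.sum_const, smul_eq_mul, mul_comm]
  have hset : {y : V | ∃ v ∈ π.support, H.Adj y v} = (N : Set V) := by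
    ext y
    simp [hNdef]
  rw [hset, Set.ncard_coe_finset]
  rw [div_le_iff₀ (by norm_num : (0 : ℝ) < 6)]
  have h6 : (x * d : ℝ) ≤ 3 * (N.card : ℝ) := by exact_mod_cast key
  have hN0 : (0 : ℝ) ≤ (N.card : ℝ) := Nat.cast_nonneg _
  push_cast at h6 ⊢
  linarith
end

section
/- Let G be an undirected unweighted graph, H a subgraph of G, and suppose H contains a shortest path tree of G rooted at a node r, where r is adjacent in G to a node u lying on some shortest s⇝t path of G. Then dist_H(s,t) ≤ dist_G(s,t) + 2. -/
/-- The +2 stretch argument: if the subgraph `H ≤ G` contains a shortest path tree of `G`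
rooted at `r` (so `H` realizes all `G`-distances from `r`), and `r` is adjacent in `G` to a
node `u` lying on some shortest `s⇝t` path of `G`, then `dist_H(s,t) ≤ dist_G(s,t) + 2`.
Distances are `ℕ∞`-valued (`⊤` for unreachable pairs). -/
theorem stmt9 {V : Type} (G H : SimpleGraph V) (hle : H ≤ G) (r u s t : V)
    (hSPT : ∀ v : V, H.edist r v = G.edist r v)
    (hru : G.Adj r u)
    (hpath : ∃ p : G.Walk s t, (p.length : ℕ∞) = G.edist s t ∧ u ∈ p.support) :
    H.edist s t ≤ G.edist s t + 2 := by
  classical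
  obtain ⟨p, hp, hu⟩ := hpath
  have hsplit : (p.takeUntil u hu).length + (p.dropUntil u hu).length = p.length := by
    rw [← SimpleGraph.Walk.length_append, SimpleGraph.Walk.take_spec]
  have h1 : G.edist s u ≤ (p.takeUntil u hu).length := SimpleGraph.edist_le _
  have h2 : G.edist u t ≤ (p.dropUntil u hu).length := SimpleGraph.edist_le _
  have hsum : G.edist s u + G.edist u t ≤ G.edist s t := by
    rw [← hp, ← hsplit]
    push_cast
    exact add_le_add h1 h2
  have hru1 : G.edist r u = 1 := SimpleGraph.edist_eq_one_iff_adj.mpr hru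
  have htri : H.edist s t ≤ H.edist s r + H.edist r t := SimpleGraph.edist_triangle
  have hsr : H.edist s r = G.edist r s := by rw [SimpleGraph.edist_comm, hSPT]
  have hrt : H.edist r t = G.edist r t := hSPT t
  calc H.edist s t ≤ H.edist s r + H.edist r t := htri
    _ = G.edist r s + G.edist r t := by rw [hsr, hrt]
    _ ≤ (G.edist r u + G.edist u s) + (G.edist r u + G.edist u t) :=
        add_le_add SimpleGraph.edist_triangle SimpleGraph.edist_triangle
    _ = (G.edist s u + G.edist u t) + 2 := by
        rw [hru1, show G.edist u s = G.edist s u from SimpleGraph.edist_comm]; ring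
    _ ≤ G.edist s t + 2 := add_le_add_left hsum 2
end

section
/- Let G be an undirected unweighted graph and H a subgraph. Suppose x, x' lie on a shortest s⇝t path with dist_H(s,x) = dist_G(s,x) and dist_H(x',t) = dist_G(x',t), and suppose there exist nodes u, u' with dist_G(u,u') ≤ dist_G(x,x'), dist_H(u,u') = dist_G(u,u'), and edges in H giving dist_H(x,u) ≤ 2 and dist_H(u',x') ≤ 2 — more precisely dist_H(x,x') ≤ dist_H(u,u') + 4. Then dist_H(s,t) ≤ dist_G(s,t) + 4. -/
/-- The +4 stretch argument (medium-pair case of the +4 pairwise spanner): `x, x'` lie (in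
order) on a shortest `s⇝t` path of `G`; the subgraph `H ≤ G` realizes the `G`-distances
`s⇝x` and `x'⇝t`; and there exist nodes `u, u'` with `dist_G(u,u') ≤ dist_G(x,x')`,
`dist_H(u,u') = dist_G(u,u')`, and `dist_H(x,x') ≤ dist_H(u,u') + 4`.  Then
`dist_H(s,t) ≤ dist_G(s,t) + 4`.  Distances are `ℕ∞`-valued. -/
theorem stmt11 {V : Type} [DecidableEq V] (G H : SimpleGraph V) (hle : H ≤ G)
    (s t x x' u u' : V)
    (p : G.Walk s t) (hshort : (p.length : ℕ∞) = G.edist s t)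
    (hx : x ∈ p.support) (hx' : x' ∈ (p.dropUntil x hx).support)
    (hpre : H.edist s x = G.edist s x) (hsuf : H.edist x' t = G.edist x' t)
    (hmin : G.edist u u' ≤ G.edist x x')
    (huu' : H.edist u u' = G.edist u u')
    (hxx' : H.edist x x' ≤ H.edist u u' + 4) :
    H.edist s t ≤ G.edist s t + 4 := by
  have q1 := p.takeUntil x hx
  have hlen : p.length = (p.takeUntil x hx).length + (p.dropUntil x hx).length := by
    conv_lhs => rw [← p.take_spec hx]
    rw [SimpleGraph.Walk.length_append]
  have hlen2 : (p.dropUntil x hx).length =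
      ((p.dropUntil x hx).takeUntil x' hx').length +
      ((p.dropUntil x hx).dropUntil x' hx').length := by
    conv_lhs => rw [← (p.dropUntil x hx).take_spec hx']
    rw [SimpleGraph.Walk.length_append]
  have h1 : G.edist s x ≤ ((p.takeUntil x hx).length : ℕ∞) :=
    SimpleGraph.Walk.edist_le _
  have h2 : G.edist x x' ≤ (((p.dropUntil x hx).takeUntil x' hx').length : ℕ∞) :=
    SimpleGraph.Walk.edist_le _
  have h3 : G.edist x' t ≤ (((p.dropUntil x hx).dropUntil x' hx').length : ℕ∞) :=
    SimpleGraph.Walk.edist_le _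
  have hsum : G.edist s x + G.edist x x' + G.edist x' t ≤ G.edist s t := by
    rw [← hshort, hlen, hlen2]
    push_cast
    calc G.edist s x + G.edist x x' + G.edist x' t
        ≤ ((p.takeUntil x hx).length : ℕ∞) +
          (((p.dropUntil x hx).takeUntil x' hx').length : ℕ∞) +
          (((p.dropUntil x hx).dropUntil x' hx').length : ℕ∞) := by
          exact add_le_add (add_le_add h1 h2) h3
      _ = _ := by push_cast; ring
  calc H.edist s t ≤ H.edist s x + H.edist x x' + H.edist x' t := by
        exact le_trans (H.edist_triangle (v := x')) (add_le_add_left (H.edist_triangle (v := x)) _)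
    _ ≤ G.edist s x + (G.edist x x' + 4) + G.edist x' t := by
        refine add_le_add (add_le_add hpre.le ?_) hsuf.le
        exact hxx'.trans (by rw [huu']; exact add_le_add_left hmin 4)
    _ = G.edist s x + G.edist x x' + G.edist x' t + 4 := by ring
    _ ≤ G.edist s t + 4 := add_le_add_left hsum 4
end
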